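/- Let β_L, β_R > 0. For E > 0 the quantity A(E) := (2e^{(β_L + β_R)E} − e^{β_L E} − e^{β_R E})/(e^{β_L E} + e^{β_R E} − 2) is well defined and greater than 1, and lim_{E→0⁺} E/ln(A(E)) = (1/2)·(1/β_L + 1/β_R). -/

import Mathlib

open Real Filter Set

lemma auxslope : Tendsto (fun x : ℝ => (Real.exp x - 1)/x) (nhdsWithin 0 (Set.Ioi 0)) (nhds 1) := by
  have h := Real.hasDerivAt_exp 0
  rw [Real.exp_zero] at h
  have h2 := hasDerivAt_iff_tendsto_slope.mp h
  have h3 := h2.mono_left (nhdsWithin_mono 0 (fun x hx => ne_of_gt hx))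
  exact h3.congr (fun x => by simp [slope_def_field])

lemma auxbeta (β : ℝ) (hβ : 0 < β) :
    Tendsto (fun E : ℝ => E / (Real.exp (β*E) - 1)) (nhdsWithin 0 (Set.Ioi 0)) (nhds (1/β)) := by
  have hmap : Tendsto (fun E : ℝ => β*E) (nhdsWithin 0 (Set.Ioi 0)) (nhdsWithin 0 (Set.Ioi 0)) := by
    apply tendsto_nhdsWithin_of_tendsto_nhds_of_eventually_within
    · have : Tendsto (fun E : ℝ => β*E) (nhds 0) (nhds (β*0)) := (tendsto_id.const_mul β)
      rw [mul_zero] at this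
      exact this.mono_left nhdsWithin_le_nhds
    · filter_upwards [self_mem_nhdsWithin] with E hE
      exact mul_pos hβ hE
  have hcomp : Tendsto (fun E : ℝ => (Real.exp (β*E) - 1)/(β*E)) (nhdsWithin 0 (Set.Ioi 0)) (nhds 1) :=
    auxslope.comp hmap
  have hinv := hcomp.inv₀ one_ne_zero
  have h5 := hinv.const_mul (1/β)
  rw [inv_one, mul_one] at h5
  refine h5.congr' ?_
  filter_upwards [self_mem_nhdsWithin] with E hE
  have hβE : 0 < β*E := mul_pos hβ hE
  have hX : Real.exp (β*E) - 1 ≠ 0 := by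
    have : 1 < Real.exp (β*E) := Real.one_lt_exp_iff.mpr hβE
    linarith
  have hE0 : E ≠ 0 := ne_of_gt hE
  field_simp

lemma auxlogslope : Tendsto (fun x : ℝ => Real.log x / (x - 1)) (nhdsWithin 1 {(1:ℝ)}ᶜ) (nhds 1) := by
  have h := Real.hasDerivAt_log one_ne_zero
  rw [inv_one] at h
  have h2 := hasDerivAt_iff_tendsto_slope.mp h
  exact h2.congr (fun x => by simp [slope_def_field])

/-- For `β_L, β_R > 0` and `E > 0`, the quantity
`A(E) = (2e^{(β_L+β_R)E} − e^{β_L E} − e^{β_R E})/(e^{β_L E} + e^{β_R E} − 2)` is well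
defined (the denominator is positive) and `A(E) > 1`, and the detailed balance effective
temperature satisfies `lim_{E→0⁺} E/ln(A(E)) = (1/2)(1/β_L + 1/β_R)`. -/
theorem stmt15 (βL βR : ℝ) (hL : 0 < βL) (hR : 0 < βR) :
    (∀ E : ℝ, 0 < E →
      0 < Real.exp (βL * E) + Real.exp (βR * E) - 2 ∧
      1 < (2 * Real.exp ((βL + βR) * E) - Real.exp (βL * E) - Real.exp (βR * E)) /
            (Real.exp (βL * E) + Real.exp (βR * E) - 2)) ∧
    Tendsto (fun E : ℝ => E / Real.log
        ((2 * Real.exp ((βL + βR) * E) - Real.exp (βL * E) - Real.exp (βR * E)) /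
          (Real.exp (βL * E) + Real.exp (βR * E) - 2)))
      (nhdsWithin 0 (Set.Ioi 0))
      (nhds ((1 / 2) * (1 / βL + 1 / βR))) := by
  set A : ℝ → ℝ := fun E =>
    (2 * Real.exp ((βL + βR) * E) - Real.exp (βL * E) - Real.exp (βR * E)) /
      (Real.exp (βL * E) + Real.exp (βR * E) - 2) with hA
  -- basic pointwise facts
  have hexp : ∀ E : ℝ, Real.exp ((βL + βR) * E) = Real.exp (βL * E) * Real.exp (βR * E) := by
    intro E; rw [← Real.exp_add]; ring_nf
  have hfacts : ∀ E : ℝ, 0 < E →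
      1 < Real.exp (βL * E) ∧ 1 < Real.exp (βR * E) ∧
      0 < Real.exp (βL * E) + Real.exp (βR * E) - 2 ∧ 1 < A E := by
    intro E hE
    have ha : 1 < Real.exp (βL * E) := Real.one_lt_exp_iff.mpr (mul_pos hL hE)
    have hb : 1 < Real.exp (βR * E) := Real.one_lt_exp_iff.mpr (mul_pos hR hE)
    have hs : 0 < Real.exp (βL * E) + Real.exp (βR * E) - 2 := by linarith
    refine ⟨ha, hb, hs, ?_⟩
    rw [hA, lt_div_iff₀ hs, hexp E]
    nlinarith [mul_pos (sub_pos.mpr ha) (sub_pos.mpr hb)]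
  -- key identity: A E - 1 = 2(a-1)(b-1)/s
  have hAm1 : ∀ E : ℝ, 0 < E → A E - 1 =
      2 * (Real.exp (βL * E) - 1) * (Real.exp (βR * E) - 1) /
        (Real.exp (βL * E) + Real.exp (βR * E) - 2) := by
    intro E hE
    obtain ⟨ha, hb, hs, _⟩ := hfacts E hE
    rw [hA]
    rw [div_sub_one (ne_of_gt hs), hexp E]
    congr 1
    ring
  -- identity: (1/2)(E/(a-1)+E/(b-1)) = E/(A E - 1)
  have hid : ∀ E : ℝ, 0 < E →
      (1/2) * (E / (Real.exp (βL * E) - 1) + E / (Real.exp (βR * E) - 1)) = E / (A E - 1) := by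
    intro E hE
    obtain ⟨ha, hb, hs, _⟩ := hfacts E hE
    rw [hAm1 E hE]
    have ha' : Real.exp (βL * E) - 1 ≠ 0 := by linarith
    have hb' : Real.exp (βR * E) - 1 ≠ 0 := by linarith
    have hs' : Real.exp (βL * E) + Real.exp (βR * E) - 2 ≠ 0 := ne_of_gt hs
    rw [div_add_div _ _ ha' hb', div_div_eq_mul_div]
    field_simp
    ring
  refine ⟨fun E hE => ⟨(hfacts E hE).2.2.1, (hfacts E hE).2.2.2⟩, ?_⟩
  -- limit of F := (1/2)(E/(a-1)+E/(b-1))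
  have hF : Tendsto (fun E : ℝ => (1/2) * (E / (Real.exp (βL * E) - 1) + E / (Real.exp (βR * E) - 1)))
      (nhdsWithin 0 (Set.Ioi 0)) (nhds ((1/2) * (1/βL + 1/βR))) :=
    ((auxbeta βL hL).add (auxbeta βR hR)).const_mul _
  -- A tends to 1 within Ioi 0
  have hc : (0:ℝ) < (1/2) * (1/βL + 1/βR) := by positivity
  have hAtend : Tendsto A (nhdsWithin 0 (Set.Ioi 0)) (nhds 1) := by
    have h1 : Tendsto (fun E : ℝ => 1 + E / ((1/2) * (E / (Real.exp (βL * E) - 1) + E / (Real.exp (βR * E) - 1))))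
        (nhdsWithin 0 (Set.Ioi 0)) (nhds (1 + 0 / ((1/2) * (1/βL + 1/βR)))) := by
      exact tendsto_const_nhds.add ((tendsto_id.mono_left nhdsWithin_le_nhds).div hF (ne_of_gt hc))
    rw [zero_div, add_zero] at h1
    refine h1.congr' ?_
    filter_upwards [self_mem_nhdsWithin] with E hE
    have hE : (0:ℝ) < E := hE
    obtain ⟨ha, hb, hs, hA1⟩ := hfacts E hE
    rw [hid E hE]
    have hne : A E - 1 ≠ 0 := by linarith
    rw [div_div_eq_mul_div, mul_comm, mul_div_assoc, div_self (ne_of_gt hE), mul_one]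
    ring
  -- A tends to 1 within punctured nhds
  have hA' : Tendsto A (nhdsWithin 0 (Set.Ioi 0)) (nhdsWithin 1 {(1:ℝ)}ᶜ) := by
    apply tendsto_nhdsWithin_of_tendsto_nhds_of_eventually_within _ hAtend
    filter_upwards [self_mem_nhdsWithin] with E hE
    exact ne_of_gt (hfacts E hE).2.2.2
  have hcomp : Tendsto (fun E : ℝ => Real.log (A E) / (A E - 1)) (nhdsWithin 0 (Set.Ioi 0)) (nhds 1) :=
    auxlogslope.comp hA'
  have hinv := hcomp.inv₀ one_ne_zero
  rw [inv_one] at hinv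
  have hfinal := hF.mul hinv
  rw [mul_one] at hfinal
  refine hfinal.congr' ?_
  filter_upwards [self_mem_nhdsWithin] with E hE
  have hE : (0:ℝ) < E := hE
  obtain ⟨ha, hb, hs, hA1⟩ := hfacts E hE
  have hlogpos : 0 < Real.log (A E) := Real.log_pos hA1
  have hne : A E - 1 ≠ 0 := by linarith
  rw [hid E hE]
  show E / (A E - 1) * (Real.log (A E) / (A E - 1))⁻¹ = E / Real.log (A E)
  rw [inv_div]
  field_simp
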